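/- For a bipartite pure state |ψ⟩ = Σᵢ |i⟩_A|wᵢ⟩_B with ⟨wᵢ|wᵢ⟩ = pᵢ, the trace-distance disturbance caused by the complete projective measurement Π_A in the basis {|i⟩} satisfies ½‖|ψ⟩⟨ψ| − Π_A[|ψ⟩⟨ψ|]‖₁ = c, where c ≥ 0 is the unique nonnegative solution of Σᵢ pᵢ/(c + pᵢ) = 1. -/

import Mathlib

open Matrix Kronecker BigOperators
open scoped ComplexOrder

/-- Trace norm (Schatten 1-norm): `Tr √(XᴴX)`. -/
noncomputable def traceNorm {m n : Type*} [Fintype m] [Fintype n] [DecidableEq n]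
    (X : Matrix m n ℂ) : ℝ :=
  (((Matrix.posSemidef_conjTranspose_mul_self X).1.eigenvectorUnitary.1 *
      Matrix.diagonal (((↑) : ℝ → ℂ) ∘ (√·) ∘ (Matrix.posSemidef_conjTranspose_mul_self X).1.eigenvalues) *
      (star (Matrix.posSemidef_conjTranspose_mul_self X).1.eigenvectorUnitary : Matrix n n ℂ)).trace).re


/-- Local complete projective measurement on subsystem `A` of a bipartite system, in the
local orthonormal basis `e`: `Π_A[τ] = Σᵢ (|eᵢ⟩⟨eᵢ| ⊗ 1) τ (|eᵢ⟩⟨eᵢ| ⊗ 1)`. -/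
noncomputable def projMeasA {dA dB : ℕ} (e : Fin dA → Fin dA → ℂ)
    (τ : Matrix (Fin dA × Fin dB) (Fin dA × Fin dB) ℂ) :
    Matrix (Fin dA × Fin dB) (Fin dA × Fin dB) ℂ :=
  ∑ i, (Matrix.vecMulVec (e i) (star (e i)) ⊗ₖ (1 : Matrix (Fin dB) (Fin dB) ℂ)) * τ *
       (Matrix.vecMulVec (e i) (star (e i)) ⊗ₖ (1 : Matrix (Fin dB) (Fin dB) ℂ))

/-! ### auxiliary general lemmas -/

section Aux

variable {κ : Type*} [Fintype κ] [DecidableEq κ]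

open scoped MatrixOrder in
lemma aux_traceNorm_of_decomp
    (X A B : Matrix κ κ ℂ) (hX : X = A - B)
    (hA : A.PosSemidef) (hB : B.PosSemidef) (hAB : A * B = 0) (hBA : B * A = 0) :
    traceNorm X = (A.trace + B.trace).re := by
  have hsq : (A + B) ^ 2 = Xᴴ * X := by
    have hXh : Xᴴ = X := by
      rw [hX, conjTranspose_sub, hA.1.eq, hB.1.eq]
    rw [hXh, hX]
    simp only [pow_two, sub_mul, mul_sub, add_mul, mul_add, hAB, hBA]
    noncomm_ring
  have hApB : (0 : Matrix κ κ ℂ) ≤ A + B := (hA.add hB).nonneg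
  have h : CFC.sqrt (Xᴴ * X) = A + B := by rw [← hsq]; exact CFC.sqrt_sq (A + B)
  have h2 : traceNorm X = (CFC.sqrt (Xᴴ * X)).trace.re := by
    rw [CFC.sqrt_eq_real_sqrt _ (posSemidef_conjTranspose_mul_self X).nonneg,
      cfcₙ_eq_cfc (hf0 := Real.sqrt_zero), (posSemidef_conjTranspose_mul_self X).1.cfc_eq]; rfl
  rw [h2, h, trace_add]

lemma aux_vv_herm (y : κ → ℂ) : (vecMulVec y (star y))ᴴ = vecMulVec y (star y) := by
  ext i j
  simp [vecMulVec_apply, conjTranspose_apply, mul_comm]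

lemma aux_vv_mulVec (y : κ → ℂ) (x : κ → ℂ) :
    (vecMulVec y (star y)) *ᵥ x = (star y ⬝ᵥ x) • y := by
  ext a
  simp only [mulVec, dotProduct, vecMulVec_apply, Pi.smul_apply, smul_eq_mul, Pi.star_apply,
    Finset.sum_mul, Finset.mul_sum]
  exact Finset.sum_congr rfl fun b _ => by ring

lemma aux_quadform (y : κ → ℂ) (x : κ → ℂ) :
    star x ⬝ᵥ ((vecMulVec y (star y)) *ᵥ x) = ((‖star y ⬝ᵥ x‖ ^ 2 : ℝ) : ℂ) := by
  rw [aux_vv_mulVec, dotProduct_smul]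
  have h1 : star x ⬝ᵥ y = (starRingEnd ℂ) (star y ⬝ᵥ x) := by
    rw [dotProduct, dotProduct, _root_.map_sum]
    refine Finset.sum_congr rfl fun b _ => ?_
    simp only [Pi.star_apply, _root_.map_mul, Complex.star_def, Complex.conj_conj]
    ring
  rw [h1, smul_eq_mul, Complex.mul_conj, Complex.normSq_eq_norm_sq]

lemma aux_vv_psd (y : κ → ℂ) : (vecMulVec y (star y)).PosSemidef := by
  refine PosSemidef.of_dotProduct_mulVec_nonneg (aux_vv_herm y) fun x => ?_
  rw [aux_quadform, Complex.zero_le_real]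
  positivity

lemma aux_vv_mul_left (y : κ → ℂ) (C : Matrix κ κ ℂ) (b : κ → ℂ) :
    vecMulVec y b * C = vecMulVec y (b ᵥ* C) := by
  ext i j
  simp only [mul_apply, vecMulVec_apply, vecMul, dotProduct, Finset.mul_sum]
  exact Finset.sum_congr rfl fun k _ => by ring

lemma aux_vecMul_herm (Δ : Matrix κ κ ℂ) (hΔ : Δᴴ = Δ) (x : κ → ℂ) :
    star x ᵥ* Δ = star (Δ *ᵥ x) := by
  nth_rewrite 1 [← hΔ]
  rw [star_mulVec]

end Aux


section Aux2

variable {κ ι : Type*} [Fintype κ] [Fintype ι] [DecidableEq κ] [DecidableEq ι]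

lemma aux_dot_sum (w : κ → ℂ) (f : ι → κ → ℂ) :
    w ⬝ᵥ (∑ j, f j) = ∑ j, w ⬝ᵥ f j := by
  simp only [dotProduct, Finset.sum_apply, Finset.mul_sum]
  rw [Finset.sum_comm]

lemma aux_sum_dot (w : κ → ℂ) (f : ι → κ → ℂ) :
    (∑ j, f j) ⬝ᵥ w = ∑ j, f j ⬝ᵥ w := by
  simp only [dotProduct, Finset.sum_apply, Finset.sum_mul]
  rw [Finset.sum_comm]

lemma aux_mul_vv (C : Matrix κ κ ℂ) (a b : κ → ℂ) :
    C * vecMulVec a b = vecMulVec (C *ᵥ a) b := by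
  ext i j
  simp only [mul_apply, vecMulVec_apply, mulVec, dotProduct, Finset.sum_mul]
  exact Finset.sum_congr rfl fun k _ => by ring

lemma aux_vv_smul_right (a b : κ → ℂ) (s : ℂ) :
    vecMulVec a (s • b) = s • vecMulVec a b := by
  ext i j
  simp only [vecMulVec_apply, Pi.smul_apply, smul_eq_mul, Matrix.smul_apply]
  ring

lemma aux_mul_of_eigen (M : Matrix κ κ ℂ) (hM : Mᴴ = M) (x : κ → ℂ) (μ : ℝ)
    (hx : M *ᵥ x = (μ : ℂ) • x) :
    vecMulVec x (star x) * M = (μ : ℂ) • vecMulVec x (star x) := by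
  rw [aux_vv_mul_left, aux_vecMul_herm M hM, hx]
  rw [star_smul, Complex.star_def, Complex.conj_ofReal, aux_vv_smul_right]

lemma aux_sum_mulVec (f : ι → Matrix κ κ ℂ) (x : κ → ℂ) :
    (∑ j, f j) *ᵥ x = ∑ j, f j *ᵥ x := by
  ext a
  simp only [mulVec, dotProduct, Finset.sum_apply, Matrix.sum_apply, Finset.sum_mul]
  rw [Finset.sum_comm]

end Aux2

/-! ### the scalar inequality -/

lemma aux_real_final (c N K s t Z : ℝ) (hc0 : 0 ≤ c) (hN : 0 < N) (hK : 0 ≤ K)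
    (ht : 0 ≤ t) (hZ : 0 ≤ Z) (h1 : c*N + K = 1) (h2 : t^2 ≤ K * Z) :
    (c*s + t)^2 ≤ (c/N)*s^2 + Z := by
  have hKe : K = 1 - c*N := by linarith
  subst hKe
  have hrw : (c/N)*s^2 + Z = (c*s^2 + N*Z)/N := by field_simp
  rw [hrw, le_div_iff₀ hN]
  rcases eq_or_lt_of_le hK with hK0 | hKpos
  · have ht0 : t = 0 := by nlinarith
    subst ht0
    nlinarith [mul_nonneg (mul_nonneg hc0 hN.le) hZ, mul_nonneg hc0 (sq_nonneg s)]
  · have h3 : 0 ≤ (1-c*N)*Z - t^2 := by nlinarith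
    nlinarith [mul_nonneg hc0 (sq_nonneg ((1-c*N)*s - N*t)),
      mul_nonneg (mul_nonneg (mul_nonneg hc0 hN.le) hN.le) h3,
      mul_nonneg (mul_nonneg hK hN.le) h3, mul_pos hKpos hN]

lemma aux_key_ineq {n : ℕ} (p : Fin n → ℝ) (hp : ∀ i, 0 ≤ p i) (c : ℝ) (hc0 : 0 ≤ c)
    (hc : ∑ i, p i / (c + p i) = 1)
    (z : Fin n → ℂ) (hz : ∀ i, c + p i = 0 → z i = 0) :
    ‖∑ i, z i‖ ^ 2 ≤
      (c / (∑ i, p i / (c + p i) ^ 2)) * ‖∑ i, (((c + p i)⁻¹ : ℝ) : ℂ) * z i‖ ^ 2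
        + ∑ i, ‖z i‖ ^ 2 := by
  set N : ℝ := ∑ i, p i / (c + p i) ^ 2 with hN_def
  set K : ℝ := ∑ i, (p i) ^ 2 / (c + p i) ^ 2 with hK_def
  have hcp : ∀ i, 0 ≤ c + p i := fun i => add_nonneg hc0 (hp i)
  have hN : 0 < N := by
    rcases Finset.exists_ne_zero_of_sum_ne_zero (s := Finset.univ)
      (f := fun i => p i / (c + p i)) (by rw [hc]; norm_num) with ⟨i, _, hi⟩
    have hpi : p i ≠ 0 := fun h => hi (by simp [h])
    have hcpi : c + p i ≠ 0 := fun h => hi (by simp [h])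
    have : 0 < p i / (c + p i) ^ 2 := by
      apply div_pos ((hp i).lt_of_ne (Ne.symm hpi))
      exact pow_pos ((hcp i).lt_of_ne (Ne.symm hcpi)) 2
    refine Finset.sum_pos' (fun j _ => div_nonneg (hp j) (sq_nonneg _))
      ⟨i, Finset.mem_univ i, this⟩
  have hK : 0 ≤ K := Finset.sum_nonneg fun j _ => div_nonneg (sq_nonneg _) (sq_nonneg _)
  have h1 : c * N + K = 1 := by
    rw [hN_def, hK_def, Finset.mul_sum, ← Finset.sum_add_distrib, ← hc]
    refine Finset.sum_congr rfl fun i _ => ?_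
    rcases eq_or_ne (c + p i) 0 with h0 | h0
    · simp [h0]
    · field_simp
  set S : ℂ := ∑ i, (((c + p i)⁻¹ : ℝ) : ℂ) * z i with hS_def
  set T : ℂ := ∑ i, ((p i / (c + p i) : ℝ) : ℂ) * z i with hT_def
  have hsplit : ∑ i, z i = (c : ℂ) * S + T := by
    rw [hS_def, hT_def, Finset.mul_sum, ← Finset.sum_add_distrib]
    refine Finset.sum_congr rfl fun i _ => ?_
    rcases eq_or_ne (c + p i) 0 with h0 | h0
    · simp [hz i h0]
    · have hco : (c : ℂ) * (((c + p i)⁻¹ : ℝ) : ℂ) + ((p i / (c + p i) : ℝ) : ℂ) = 1 := by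
        push_cast
        field_simp
        exact div_self (by exact_mod_cast h0)
      calc z i = ((c : ℂ) * (((c + p i)⁻¹ : ℝ) : ℂ) + ((p i / (c + p i) : ℝ) : ℂ)) * z i := by
            rw [hco, one_mul]
        _ = _ := by ring
  have hT_le : ‖T‖ ≤ ∑ i, (p i / (c + p i)) * ‖z i‖ := by
    refine (norm_sum_le _ _).trans ?_
    refine Finset.sum_le_sum fun i _ => ?_
    rw [norm_mul, Complex.norm_real, Real.norm_eq_abs, abs_of_nonneg (div_nonneg (hp i) (hcp i))]
  have hT2 : ‖T‖ ^ 2 ≤ K * ∑ i, ‖z i‖ ^ 2 := by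
    calc ‖T‖ ^ 2 ≤ (∑ i, (p i / (c + p i)) * ‖z i‖) ^ 2 := by
          exact pow_le_pow_left₀ (norm_nonneg _) hT_le 2
      _ ≤ (∑ i, (p i / (c + p i)) ^ 2) * ∑ i, ‖z i‖ ^ 2 :=
          Finset.sum_mul_sq_le_sq_mul_sq _ _ _
      _ = K * ∑ i, ‖z i‖ ^ 2 := by
          rw [hK_def]
          congr 1
          exact Finset.sum_congr rfl fun i _ => by rw [div_pow]
  have hfin : ‖∑ i, z i‖ ≤ c * ‖S‖ + ‖T‖ := by
    rw [hsplit]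
    refine (norm_add_le _ _).trans ?_
    rw [norm_mul, Complex.norm_real, Real.norm_eq_abs, abs_of_nonneg hc0]
  calc ‖∑ i, z i‖ ^ 2 ≤ (c * ‖S‖ + ‖T‖) ^ 2 := by
        exact pow_le_pow_left₀ (norm_nonneg _) hfin 2
    _ ≤ (c / N) * ‖S‖ ^ 2 + ∑ i, ‖z i‖ ^ 2 :=
        aux_real_final c N K ‖S‖ ‖T‖ _ hc0 hN hK (norm_nonneg _)
          (Finset.sum_nonneg fun i _ => by positivity) h1 hT2

set_option maxHeartbeats 1000000 in
/-- for a bipartite pure state `|ψ⟩`, the trace-distance disturbance caused by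
the complete projective measurement on `A` in the orthonormal basis `{|eᵢ⟩}` equals the
unique nonnegative solution `c` of `Σᵢ pᵢ/(c + pᵢ) = 1`, where `pᵢ = ⟨eᵢ|Tr_B(|ψ⟩⟨ψ|)|eᵢ⟩`. -/
theorem disturbance_pure_bipartite {dA dB : ℕ}
    (ψ : Fin dA × Fin dB → ℂ) (hψ : ∑ x, ‖ψ x‖^2 = 1)
    (e : Fin dA → Fin dA → ℂ)
    (he : ∀ i j, star (e i) ⬝ᵥ e j = if i = j then 1 else 0)
    (p : Fin dA → ℝ)
    (hp : ∀ i, (p i : ℂ) =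
      star (e i) ⬝ᵥ ((Matrix.of fun a b : Fin dA => ∑ k, ψ (a, k) * star (ψ (b, k))) *ᵥ e i))
    (c : ℝ) (hc0 : 0 ≤ c) (hc : ∑ i, p i / (c + p i) = 1) :
    (1 / 2) * traceNorm (Matrix.vecMulVec ψ (star ψ) - projMeasA e (Matrix.vecMulVec ψ (star ψ)))
      = c := by
  classical
  set v : Fin dA → Fin dB → ℂ := fun i b => ∑ a, star (e i a) * ψ (a, b) with hv_def
  set u : Fin dA → (Fin dA × Fin dB → ℂ) := fun i x => e i x.1 * v i x.2 with hu_def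
  -- p i = ∑ ‖v i k‖²
  have hvp : ∀ i, star (v i) ⬝ᵥ v i = (p i : ℂ) := by
    intro i
    rw [hp i]
    simp only [dotProduct, mulVec, of_apply, Pi.star_apply, hv_def, dotProduct,
      star_sum, star_mul', Complex.star_def, Complex.conj_conj,
      Finset.sum_mul, Finset.mul_sum]
    rw [Finset.sum_comm]
    refine Finset.sum_congr rfl fun a _ => ?_
    rw [Finset.sum_comm]
    refine Finset.sum_congr rfl fun b _ => Finset.sum_congr rfl fun k _ => by ring
  have hpnorm : ∀ i, p i = ∑ k, ‖v i k‖^2 := by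
    intro i
    have h2 : star (v i) ⬝ᵥ v i = ((∑ k, ‖v i k‖^2 : ℝ) : ℂ) := by
      rw [dotProduct]
      push_cast
      refine Finset.sum_congr rfl fun k _ => ?_
      rw [Pi.star_apply, Complex.star_def, mul_comm, Complex.mul_conj, Complex.normSq_eq_norm_sq]
      push_cast
      ring
    have := (hvp i).symm.trans h2
    exact_mod_cast this
  have hp0 : ∀ i, 0 ≤ p i := fun i => by
    rw [hpnorm i]; positivity
  have hu0 : ∀ i, p i = 0 → u i = 0 := by
    intro i hpi
    have hv0 : v i = 0 := by
      funext k
      have h := hpnorm i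
      rw [hpi] at h
      have : ∀ k, ‖v i k‖^2 = 0 := by
        intro k'
        have h1 : ∀ j ∈ Finset.univ, (0:ℝ) ≤ ‖v i j‖^2 := fun j _ => by positivity
        have := (Finset.sum_eq_zero_iff_of_nonneg h1).mp h.symm k' (Finset.mem_univ _)
        exact this
      have := this k
      have : ‖v i k‖ = 0 := by nlinarith [norm_nonneg (v i k)]
      exact norm_eq_zero.mp this
    funext x
    simp [hu_def, hv0]
  -- completeness of the basis
  have hcomp : ∀ a a', (∑ i, e i a * star (e i a')) = if a = a' then (1:ℂ) else 0 := by
    have hE : (Matrix.of fun a i => e i a)ᴴ * (Matrix.of fun a i => e i a) = 1 := by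
      ext i j
      simpa [Matrix.mul_apply, conjTranspose_apply, dotProduct, one_apply] using he i j
    have hE' := mul_eq_one_comm.mp hE
    intro a a'
    have h2 := congrFun (congrFun hE' a) a'
    simpa [Matrix.mul_apply, conjTranspose_apply, one_apply] using h2
  -- ψ = ∑ u i
  have hu_sum : ψ = ∑ i, u i := by
    funext x
    rw [Finset.sum_apply]
    simp only [hu_def, hv_def]
    have : ∑ i, e i x.1 * ∑ a, star (e i a) * ψ (a, x.2)
        = ∑ a, (∑ i, e i x.1 * star (e i a)) * ψ (a, x.2) := by
      simp only [Finset.mul_sum, Finset.sum_mul]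
      rw [Finset.sum_comm]
      exact Finset.sum_congr rfl fun a _ => Finset.sum_congr rfl fun i _ => by ring
    rw [this]
    simp only [hcomp, ite_mul, one_mul, zero_mul]
    rw [Finset.sum_ite_eq, if_pos (Finset.mem_univ _)]
  -- orthogonality of the u i
  have hudot : ∀ i j, star (u i) ⬝ᵥ u j = if i = j then (p i : ℂ) else 0 := by
    intro i j
    have h1 : star (u i) ⬝ᵥ u j = (star (e i) ⬝ᵥ e j) * (star (v i) ⬝ᵥ v j) := by
      rw [dotProduct, dotProduct, dotProduct, Finset.sum_mul_sum, Fintype.sum_prod_type]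
      exact Finset.sum_congr rfl fun a _ => Finset.sum_congr rfl fun b _ => by
        simp only [hu_def, Pi.star_apply, star_mul']; ring
    rw [h1, he i j]
    split
    · next h => subst h; rw [one_mul, hvp i]
    · rw [zero_mul]
  -- the measured state
  have hPsiP : projMeasA e (Matrix.vecMulVec ψ (star ψ))
      = ∑ i, vecMulVec (u i) (star (u i)) := by
    rw [projMeasA]
    refine Finset.sum_congr rfl fun i _ => ?_
    set P : Matrix (Fin dA × Fin dB) (Fin dA × Fin dB) ℂ :=
      Matrix.vecMulVec (e i) (star (e i)) ⊗ₖ (1 : Matrix (Fin dB) (Fin dB) ℂ) with hP_def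
    have hPherm : Pᴴ = P := by
      ext ⟨a, b⟩ ⟨a', b'⟩
      simp only [hP_def, conjTranspose_apply, kroneckerMap_apply, vecMulVec_apply,
        Matrix.one_apply, Pi.star_apply]
      rcases eq_or_ne b b' with h | h
      · subst h
        simp [star_mul', mul_comm]
      · simp [h, Ne.symm h]
    have hPpsi : P *ᵥ ψ = u i := by
      funext ⟨a, b⟩
      simp only [hP_def, mulVec, dotProduct, Fintype.sum_prod_type, kroneckerMap_apply,
        vecMulVec_apply, Matrix.one_apply, Pi.star_apply, mul_ite, mul_one, mul_zero,
        ite_mul, zero_mul]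
      simp only [Finset.sum_ite_eq, Finset.mem_univ, if_true]
      simp only [hu_def, hv_def, Finset.mul_sum]
      exact Finset.sum_congr rfl fun a' _ => by ring
    rw [aux_mul_vv, hPpsi, aux_vv_mul_left, aux_vecMul_herm P hPherm, hPpsi]
  -- Δ
  set Δ : Matrix (Fin dA × Fin dB) (Fin dA × Fin dB) ℂ :=
    Matrix.vecMulVec ψ (star ψ) - ∑ i, vecMulVec (u i) (star (u i)) with hΔ_def
  have hΔherm : Δᴴ = Δ := by
    rw [hΔ_def, conjTranspose_sub, aux_vv_herm, conjTranspose_sum]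
    congr 1
    exact Finset.sum_congr rfl fun i _ => aux_vv_herm _
  -- the eigenvector
  set wC : Fin dA → ℂ := fun i => (((c + p i)⁻¹ : ℝ) : ℂ) with hwC_def
  set xp : Fin dA × Fin dB → ℂ := ∑ i, wC i • u i with hxp_def
  set N : ℝ := ∑ i, p i / (c + p i) ^ 2 with hN_def
  have hcp : ∀ i, 0 ≤ c + p i := fun i => add_nonneg hc0 (hp0 i)
  have hN : 0 < N := by
    rcases Finset.exists_ne_zero_of_sum_ne_zero (s := Finset.univ)
      (f := fun i => p i / (c + p i)) (by rw [hc]; norm_num) with ⟨i, _, hi⟩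
    have hpi : p i ≠ 0 := fun h => hi (by simp [h])
    have hcpi : c + p i ≠ 0 := fun h => hi (by simp [h])
    have : 0 < p i / (c + p i) ^ 2 := by
      apply div_pos ((hp0 i).lt_of_ne (Ne.symm hpi))
      exact pow_pos ((hcp i).lt_of_ne (Ne.symm hcpi)) 2
    exact Finset.sum_pos' (fun j _ => div_nonneg (hp0 j) (sq_nonneg _))
      ⟨i, Finset.mem_univ i, this⟩
  have hcpz : ∀ i, c + p i = 0 → p i = 0 := fun i h => le_antisymm (by linarith) (hp0 i)
  -- dot products with xp
  have hux : ∀ i, star (u i) ⬝ᵥ xp = wC i * (p i : ℂ) := by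
    intro i
    rw [hxp_def, aux_dot_sum]
    have : ∀ j, star (u i) ⬝ᵥ (wC j • u j) = wC j * (star (u i) ⬝ᵥ u j) := by
      intro j; rw [dotProduct_smul]; simp
    simp only [this, hudot]
    simp [Finset.sum_ite_eq, mul_comm]
  have hstar_xp : star xp = ∑ i, wC i • star (u i) := by
    rw [hxp_def, star_sum]
    refine Finset.sum_congr rfl fun i _ => ?_
    rw [star_smul, hwC_def, Complex.star_def, Complex.conj_ofReal]
  have hpsix : star ψ ⬝ᵥ xp = 1 := by
    rw [hu_sum, star_sum, aux_sum_dot]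
    have h1 : ∀ i, star (u i) ⬝ᵥ xp = ((p i / (c + p i) : ℝ) : ℂ) := by
      intro i
      rw [hux i, hwC_def]
      push_cast
      ring
    simp only [h1]
    rw [← Complex.ofReal_sum, hc, Complex.ofReal_one]
  have hxx : star xp ⬝ᵥ xp = (N : ℂ) := by
    rw [hstar_xp, aux_sum_dot]
    have h1 : ∀ i, (wC i • star (u i)) ⬝ᵥ xp = ((p i / (c + p i) ^ 2 : ℝ) : ℂ) := by
      intro i
      have hr : (p i / (c + p i) ^ 2 : ℝ) = (c + p i)⁻¹ * ((c + p i)⁻¹ * p i) := by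
        rw [pow_two, div_eq_mul_inv, mul_inv]; ring
      rw [smul_dotProduct, hux i, smul_eq_mul, hwC_def, hr]
      push_cast
      ring
    simp only [h1]
    rw [← Complex.ofReal_sum, hN_def]
  -- eigenvector equation
  have hDx : Δ *ᵥ xp = (c : ℂ) • xp := by
    rw [hΔ_def, sub_mulVec, aux_sum_mulVec, aux_vv_mulVec, hpsix, one_smul]
    have h1 : ∀ i, vecMulVec (u i) (star (u i)) *ᵥ xp = (wC i * (p i : ℂ)) • u i := by
      intro i; rw [aux_vv_mulVec, hux i]
    simp only [h1]
    rw [hu_sum]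
    rw [← Finset.sum_sub_distrib]
    rw [hxp_def, Finset.smul_sum]
    refine Finset.sum_congr rfl fun i _ => ?_
    rw [smul_smul]
    rcases eq_or_ne (c + p i) 0 with h0 | h0
    · rw [hu0 i (hcpz i h0)]
      simp
    · nth_rewrite 1 [← one_smul ℂ (u i)]
      rw [← sub_smul]
      congr 1
      have h0' : ((c : ℂ) + (p i : ℂ)) ≠ 0 := by
        rw [← Complex.ofReal_add]
        exact Complex.ofReal_ne_zero.mpr h0
      rw [hwC_def]
      push_cast
      field_simp
      ring
  -- the positive part
  set γ : ℝ := Real.sqrt (c / N) with hγ_def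
  have hγ2 : γ ^ 2 = c / N := Real.sq_sqrt (div_nonneg hc0 hN.le)
  set xh : Fin dA × Fin dB → ℂ := (γ : ℂ) • xp with hxh_def
  set A : Matrix (Fin dA × Fin dB) (Fin dA × Fin dB) ℂ := vecMulVec xh (star xh) with hA_def
  have hxhxh : star xh ⬝ᵥ xh = (c : ℂ) := by
    rw [hxh_def, star_smul, Complex.star_def, Complex.conj_ofReal, smul_dotProduct,
      dotProduct_smul, hxx]
    push_cast
    rw [smul_eq_mul, smul_eq_mul, ← mul_assoc, ← Complex.ofReal_mul, ← pow_two, hγ2]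
    rw [← Complex.ofReal_mul]
    congr 1
    field_simp
  have hDxh : Δ *ᵥ xh = (c : ℂ) • xh := by
    rw [hxh_def, mulVec_smul, hDx, smul_comm]
  have hAΔ : A * Δ = (c : ℂ) • A := aux_mul_of_eigen Δ hΔherm xh c hDxh
  have hAxh : A *ᵥ xh = (c : ℂ) • xh := by
    rw [hA_def, aux_vv_mulVec, hxhxh]
  have hAherm : Aᴴ = A := aux_vv_herm xh
  have hAA : A * A = (c : ℂ) • A := aux_mul_of_eigen A hAherm xh c hAxh
  set B : Matrix (Fin dA × Fin dB) (Fin dA × Fin dB) ℂ := A - Δ with hB_def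
  have hAB : A * B = 0 := by
    rw [hB_def, mul_sub, hAA, hAΔ, sub_self]
  have hBherm : Bᴴ = B := by rw [hB_def, conjTranspose_sub, hAherm, hΔherm]
  have hBA : B * A = 0 := by
    calc B * A = ((B * A)ᴴ)ᴴ := (conjTranspose_conjTranspose _).symm
      _ = (Aᴴ * Bᴴ)ᴴ := by rw [conjTranspose_mul]
      _ = (A * B)ᴴ := by rw [hAherm, hBherm]
      _ = 0 := by rw [hAB, conjTranspose_zero]
  -- B is PSD
  have hB_psd : B.PosSemidef := by
    refine PosSemidef.of_dotProduct_mulVec_nonneg hBherm fun y => ?_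
    have hform : star y ⬝ᵥ (B *ᵥ y)
        = ((‖star xh ⬝ᵥ y‖ ^ 2 - ‖star ψ ⬝ᵥ y‖ ^ 2 + ∑ i, ‖star (u i) ⬝ᵥ y‖ ^ 2 : ℝ) : ℂ) := by
      rw [hB_def, sub_mulVec, dotProduct_sub, hΔ_def, sub_mulVec, dotProduct_sub,
        aux_sum_mulVec, hA_def, aux_quadform, aux_quadform]
      have : star y ⬝ᵥ ((∑ i, vecMulVec (u i) (star (u i)) *ᵥ y))
          = ((∑ i, ‖star (u i) ⬝ᵥ y‖ ^ 2 : ℝ) : ℂ) := by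
        rw [aux_dot_sum, Complex.ofReal_sum]
        exact Finset.sum_congr rfl fun i _ => aux_quadform _ _
      rw [this]
      push_cast
      ring
    rw [hform, Complex.zero_le_real]
    have hz0 : ∀ i, c + p i = 0 → star (u i) ⬝ᵥ y = 0 := by
      intro i h0
      rw [hu0 i (hcpz i h0)]
      simp
    have hkey := aux_key_ineq p hp0 c hc0 hc (fun i => star (u i) ⬝ᵥ y) hz0
    have hxh_y : ‖star xh ⬝ᵥ y‖ ^ 2 = (c / N) * ‖star xp ⬝ᵥ y‖ ^ 2 := by
      rw [hxh_def, star_smul, Complex.star_def, Complex.conj_ofReal, smul_dotProduct]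
      rw [smul_eq_mul, norm_mul, mul_pow, Complex.norm_real, Real.norm_eq_abs, sq_abs, hγ2]
    have hxp_y : star xp ⬝ᵥ y = ∑ i, (((c + p i)⁻¹ : ℝ) : ℂ) * (star (u i) ⬝ᵥ y) := by
      rw [hstar_xp, aux_sum_dot]
      refine Finset.sum_congr rfl fun i _ => ?_
      rw [smul_dotProduct, hwC_def]
      simp
    have hpsi_y : star ψ ⬝ᵥ y = ∑ i, star (u i) ⬝ᵥ y := by
      rw [hu_sum, star_sum, aux_sum_dot]
    rw [hxh_y, hxp_y, hpsi_y]
    rw [← hN_def] at hkey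
    linarith [hkey]
  -- traces
  have hsum_p : (∑ i, p i) = 1 := by
    have h1 : star ψ ⬝ᵥ ψ = ((∑ x, ‖ψ x‖ ^ 2 : ℝ) : ℂ) := by
      rw [dotProduct]
      push_cast
      refine Finset.sum_congr rfl fun x _ => ?_
      rw [Pi.star_apply, Complex.star_def, mul_comm, Complex.mul_conj, Complex.normSq_eq_norm_sq]
      push_cast
      ring
    have h2 : star ψ ⬝ᵥ ψ = ((∑ i, p i : ℝ) : ℂ) := by
      nth_rewrite 2 [hu_sum]
      rw [hu_sum, star_sum, aux_sum_dot]
      have : ∀ i, star (u i) ⬝ᵥ (∑ j, u j) = (p i : ℂ) := by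
        intro i
        rw [aux_dot_sum]
        simp only [hudot]
        simp [Finset.sum_ite_eq]
      simp only [this]
      push_cast
      rfl
    rw [h1, hψ] at h2
    exact_mod_cast h2.symm
  have htraceA : A.trace = (c : ℂ) := by
    rw [hA_def, trace]
    rw [← hxhxh, dotProduct]
    refine Finset.sum_congr rfl fun x _ => ?_
    simp [vecMulVec_apply, diag, mul_comm]
  have htraceΔ : Δ.trace = 0 := by
    rw [hΔ_def, trace_sub, trace_sum]
    have h1 : (vecMulVec ψ (star ψ)).trace = (1 : ℂ) := by
      rw [trace]
      have : ∀ x, (vecMulVec ψ (star ψ)).diag x = ((‖ψ x‖ ^ 2 : ℝ) : ℂ) := by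
        intro x
        simp only [diag, vecMulVec_apply, Pi.star_apply, Complex.star_def]
        rw [Complex.mul_conj, Complex.normSq_eq_norm_sq]
      simp only [this]
      rw [← Complex.ofReal_sum, hψ, Complex.ofReal_one]
    have h2 : ∀ i, (vecMulVec (u i) (star (u i))).trace = (p i : ℂ) := by
      intro i
      have ht : (vecMulVec (u i) (star (u i))).trace = star (u i) ⬝ᵥ u i := by
        rw [trace, dotProduct]
        exact Finset.sum_congr rfl fun x _ => by simp [vecMulVec_apply, diag, mul_comm]
      rw [ht, hudot i i, if_pos rfl]
    simp only [h2, h1]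
    rw [← Complex.ofReal_sum, hsum_p]
    simp
  have htraceB : B.trace = (c : ℂ) := by
    rw [hB_def, trace_sub, htraceA, htraceΔ, sub_zero]
  -- conclusion
  have hX : Matrix.vecMulVec ψ (star ψ) - projMeasA e (Matrix.vecMulVec ψ (star ψ)) = A - B := by
    rw [hPsiP, hB_def, ← hΔ_def, sub_sub_cancel]
  rw [aux_traceNorm_of_decomp _ A B hX (aux_vv_psd xh) hB_psd hAB hBA]
  rw [htraceA, htraceB]
  push_cast
  simp
  ring
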